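/- Let T be a rooted tree, v a vertex, and r ≥ 1, μ ≥ 2 integers. Let S be a set of vertices such that every vertex u with more than μ subtrees (components of T − u) containing an S-vertex within distance r of u belongs to S. Suppose v ∉ S. Let H be the set of 'highest' vertices of S in N^r(v): vertices u ∈ S at distance at most r from v with no proper ancestor (toward v) in S. Then |H| ≤ μ^r. -/

import Mathlib

open Set in
private lemma ncard_biUnion_le' {α β : Type*} (W : Finset α) (f : α → Set β)
    (hf : ∀ a, (f a).Finite) :
    (⋃ a ∈ W, f a).ncard ≤ ∑ a ∈ W, (f a).ncard := by
  classical
  induction W using Finset.induction with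
  | empty => simp
  | insert _ _ hb ih =>
    rename_i b W'
    rw [Finset.set_biUnion_insert, Finset.sum_insert hb]
    exact le_trans (Set.ncard_union_le _ _) (Nat.add_le_add_left ih _)

/-- In a tree rooted at `v`, if `S` is closed under "more than `μ` subtrees of `u`
contain an `S`-vertex within distance `r`", and `v ∉ S`, then the set of highest
`S`-vertices within distance `r` of `v` has size at most `μ^r`.  A neighbor `w`
of `u` indexes the component of `T - u` containing it; an `S`-vertex `s` within
distance `r` of `u` lies in `w`'s component iff `dist u s = dist w s + 1`. -/
theorem stmt9 {V : Type*} [Fintype V] (T : SimpleGraph V) (hT : T.IsTree)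
    (v : V) (r μ : ℕ) (hr : 1 ≤ r) (hμ : 2 ≤ μ) (S : Set V)
    (hclosed : ∀ u : V,
      μ < {w | T.Adj u w ∧ ∃ s ∈ S, T.dist u s ≤ r ∧
        T.dist u s = T.dist w s + 1}.ncard → u ∈ S)
    (hv : v ∉ S) :
    {u | u ∈ S ∧ T.dist v u ≤ r ∧
      ∀ w, w ≠ u → T.dist v u = T.dist v w + T.dist w u → w ∉ S}.ncard ≤ μ ^ r := by
  classical
  have hc : T.Connected := hT.1
  set H : V → ℕ → Set V := fun x k =>
    {u | u ∈ S ∧ T.dist x u ≤ k ∧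
      ∀ w, w ≠ u → T.dist x u = T.dist x w + T.dist w u → w ∉ S} with hH
  suffices h : ∀ k, k ≤ r → ∀ x : V, (H x k).ncard ≤ μ ^ k by exact h r le_rfl v
  intro k
  induction k with
  | zero =>
    intro _ x
    have hsub : H x 0 ⊆ {x} := by
      intro u hu
      have h0 : T.dist x u = 0 := Nat.le_zero.mp hu.2.1
      exact ((hc.dist_eq_zero_iff).mp h0).symm
    calc (H x 0).ncard ≤ ({x} : Set V).ncard :=
          Set.ncard_le_ncard hsub (Set.finite_singleton x)
      _ = 1 := Set.ncard_singleton x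
      _ ≤ μ ^ 0 := by simp
  | succ k ih =>
    intro hk x
    by_cases hxS : x ∈ S
    · -- H x (k+1) ⊆ {x}
      have hsub : H x (k+1) ⊆ {x} := by
        intro u hu
        by_contra hne
        have hxu : x ≠ u := fun h => hne h.symm
        have := hu.2.2 x hxu (by simp [hc.dist_eq_zero_iff.mpr rfl])
        exact this hxS
      calc (H x (k+1)).ncard ≤ ({x} : Set V).ncard :=
            Set.ncard_le_ncard hsub (Set.finite_singleton x)
        _ = 1 := Set.ncard_singleton x
        _ ≤ μ ^ (k+1) := Nat.one_le_pow _ _ (by omega)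
    · set W : Set V := {w | T.Adj x w ∧ ∃ s ∈ S, T.dist x s ≤ r ∧
        T.dist x s = T.dist w s + 1} with hW
      have hWcard : W.ncard ≤ μ := by
        by_contra hlt
        have hcx := hclosed x
        rw [← hW] at hcx
        exact hxS (hcx (by omega))
      -- key containment
      have hsub : H x (k+1) ⊆ ⋃ w ∈ W.toFinset, H w k := by
        intro u hu
        obtain ⟨huS, hud, huh⟩ := hu
        have hxu : x ≠ u := fun h => hxS (h ▸ huS)
        have hdpos : T.dist x u ≠ 0 := fun h => hxu (hc.dist_eq_zero_iff.mp h)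
        obtain ⟨p, hp⟩ := hc.exists_walk_length_eq_dist x u
        -- first step of p
        cases p with
        | nil => simp at hp; exact absurd rfl hxu
        | cons hadj q =>
          rename_i w
          have hq : T.dist w u ≤ q.length := SimpleGraph.dist_le q
          have hql : q.length + 1 = T.dist x u := by
            simpa [SimpleGraph.Walk.length_cons] using hp
          have hxw : T.dist x w ≤ 1 := by
            have := SimpleGraph.dist_le (SimpleGraph.Walk.cons hadj SimpleGraph.Walk.nil)
            simpa using this
          have htri : T.dist x u ≤ T.dist x w + T.dist w u := hc.dist_triangle
          have hkey : T.dist x u = T.dist w u + 1 := by omega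
          have hwW : w ∈ W := ⟨hadj, u, huS, by omega, hkey⟩
          have huH : u ∈ H w k := by
            refine ⟨huS, by omega, ?_⟩
            intro w' hw' hgeo
            apply huh w' hw'
            have h1 : T.dist x u ≤ T.dist x w' + T.dist w' u := hc.dist_triangle
            have h2 : T.dist x w' ≤ T.dist x w + T.dist w w' := hc.dist_triangle
            omega
          exact Set.mem_biUnion (Set.mem_toFinset.mpr hwW) huH
      calc (H x (k+1)).ncard ≤ (⋃ w ∈ W.toFinset, H w k).ncard :=
            Set.ncard_le_ncard hsub (Set.Finite.biUnion (Finset.finite_toSet _)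
              (fun _ _ => Set.toFinite _))
        _ ≤ ∑ w ∈ W.toFinset, (H w k).ncard :=
            ncard_biUnion_le' _ _ (fun _ => Set.toFinite _)
        _ ≤ ∑ _w ∈ W.toFinset, μ ^ k :=
            Finset.sum_le_sum (fun w _ => ih (by omega) w)
        _ = W.ncard * μ ^ k := by
            rw [Finset.sum_const, smul_eq_mul, Set.ncard_eq_toFinset_card']
        _ ≤ μ * μ ^ k := Nat.mul_le_mul_right _ hWcard
        _ = μ ^ (k+1) := by ring
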